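/- Let H and J be ultraparallel hyperplanes in ℍ^d, and let p be a point in the open half-space bounded by H that does not contain J. Then dist(p, H) < dist(p, J). -/

import Mathlib

noncomputable section

namespace HypSpace

/-- Inverse hyperbolic cosine. -/
def arcosh (x : ℝ) : ℝ := Real.log (x + Real.sqrt (x ^ 2 - 1))

/-- The Minkowski bilinear form on `ℝ^{d+1}` (signature `(d,1)`, the last
coordinate being timelike). -/
def mink (d : ℕ) (x y : EuclideanSpace ℝ (Fin (d + 1))) : ℝ :=
  (∑ i : Fin d, x i.castSucc * y i.castSucc) - x (Fin.last d) * y (Fin.last d)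

/-- The hyperboloid model of `d`-dimensional hyperbolic space: the upper sheet
of the two-sheeted hyperboloid `mink x x = -1`. -/
def Pt (d : ℕ) : Type := {x : EuclideanSpace ℝ (Fin (d + 1)) // mink d x x = -1 ∧ 0 < x (Fin.last d)}

variable {d : ℕ}

/-- Hyperbolic distance between two points of `ℍ^d`. -/
def hdist (p q : Pt d) : ℝ := arcosh (-(mink d p.1 q.1))

/-- The geodesic segment between `a` and `b`, described metrically via betweenness
(hyperbolic space is uniquely geodesic). -/
def seg (a b : Pt d) : Set (Pt d) := {p | hdist a p + hdist p b = hdist a b}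

/-- A set is (geodesically) convex if it contains the segment between any two of its points. -/
def IsConvexSet (C : Set (Pt d)) : Prop := ∀ a ∈ C, ∀ b ∈ C, seg a b ⊆ C

/-- The convex hull: the smallest convex set containing `A`. -/
def chull (A : Set (Pt d)) : Set (Pt d) := ⋂₀ {C | IsConvexSet C ∧ A ⊆ C}

/-- The totally geodesic hyperplane with (spacelike) normal vector `v`. -/
def plane (v : EuclideanSpace ℝ (Fin (d + 1))) : Set (Pt d) := {p | mink d v p.1 = 0}

/-- A hyperplane of `ℍ^d`: the trace on the hyperboloid of a linear hyperplane
with spacelike unit normal. -/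
def IsHyperplane (H : Set (Pt d)) : Prop := ∃ v, mink d v v = 1 ∧ H = plane v

/-- Distance from a point to a set. -/
def distPS (p : Pt d) (S : Set (Pt d)) : ℝ := sInf (hdist p '' S)

/-- Distance between two sets. -/
def distSS (A B : Set (Pt d)) : ℝ := sInf {r | ∃ a ∈ A, ∃ b ∈ B, hdist a b = r}

/-- `h` is the orthogonal projection of `g` onto `H`: the point of `H`
realizing the distance from `g` to `H`.  For a hyperplane `H` with `a ∈ H`,
`IsProj b H a` also expresses that `H` is orthogonal to the segment `ab` at `a`. -/
def IsProj (g : Pt d) (H : Set (Pt d)) (h : Pt d) : Prop :=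
  h ∈ H ∧ ∀ k ∈ H, hdist g h ≤ hdist g k

/-- Two hyperplanes are ultraparallel if they are disjoint and not asymptotically
parallel (their distance is positive, i.e. they admit a common perpendicular). -/
def Ultraparallel (H J : Set (Pt d)) : Prop :=
  IsHyperplane H ∧ IsHyperplane J ∧ H ∩ J = ∅ ∧ 0 < distSS H J

/-- `p` is an interior point of `C`. -/
def IsIntr (C : Set (Pt d)) (p : Pt d) : Prop := ∃ ε > 0, ∀ q, hdist p q < ε → q ∈ C

/-- `p` is a boundary point of the (closed) set `C`. -/
def IsBdry (C : Set (Pt d)) (p : Pt d) : Prop := p ∈ C ∧ ¬ IsIntr C p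

/-- `C` is bounded. -/
def IsBddSet (C : Set (Pt d)) : Prop := ∃ R, ∀ a ∈ C, ∀ b ∈ C, hdist a b ≤ R

/-- `C` is closed. -/
def IsClosedSet (C : Set (Pt d)) : Prop :=
  ∀ p : Pt d, (∀ ε > 0, ∃ q ∈ C, hdist p q < ε) → p ∈ C

/-- A convex body: a compact (closed and bounded) convex set with nonempty interior. -/
def IsBody (C : Set (Pt d)) : Prop :=
  IsConvexSet C ∧ IsBddSet C ∧ IsClosedSet C ∧ ∃ p, IsIntr C p

/-- The hyperplane `H` supports `C`: it meets `C` but misses its interior. -/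
def Supports (H C : Set (Pt d)) : Prop :=
  IsHyperplane H ∧ (H ∩ C).Nonempty ∧ ∀ p, IsIntr C p → p ∉ H

/-- The width of `C` determined by `H`, as the maximum distance from `H`
to a point of `C`. -/
def width (H C : Set (Pt d)) : ℝ := sSup ((fun c => distPS c H) '' C)

/-- The width of `C` determined by `H`, as the distance from `H` to a farthest
supporting hyperplane of `C` ultraparallel to `H`. -/
def widthUP (H C : Set (Pt d)) : ℝ :=
  sSup {r | ∃ J, Supports J C ∧ Ultraparallel H J ∧ distSS H J = r}

/-- The thickness of `C`: the minimum width over supporting hyperplanes. -/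
def thickness (C : Set (Pt d)) : ℝ := sInf {r | ∃ H, Supports H C ∧ width H C = r}

/-- The diameter of `C`. -/
def diam (C : Set (Pt d)) : ℝ := sSup {r | ∃ a ∈ C, ∃ b ∈ C, hdist a b = r}

/-- A body of constant width `δ`. -/
def ConstWidth (W : Set (Pt d)) (δ : ℝ) : Prop :=
  IsBody W ∧ ∀ H, Supports H W → width H W = δ

/-- A complete set of diameter `δ`. -/
def CompleteSet (C : Set (Pt d)) (δ : ℝ) : Prop :=
  diam C = δ ∧ ∀ x, x ∉ C → diam (C ∪ {x}) > δ

/-- A body of constant diameter `δ`. -/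
def ConstDiam (C : Set (Pt d)) (δ : ℝ) : Prop :=
  diam C = δ ∧ ∀ p, IsBdry C p → ∃ p' ∈ C, hdist p p' = δ


lemma mink_comm (x y : EuclideanSpace ℝ (Fin (d+1))) : mink d x y = mink d y x := by
  simp [mink, mul_comm]

lemma mink_comb (c e : ℝ) (x y z : EuclideanSpace ℝ (Fin (d+1))) :
    mink d (WithLp.toLp 2 (fun i => c * x i + e * y i)) z = c * mink d x z + e * mink d y z := by
  simp only [mink, WithLp.ofLp_toLp, add_mul, Finset.sum_add_distrib, Finset.mul_sum, mul_assoc]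
  ring_nf
  simp [Finset.mul_sum, mul_assoc]

lemma pos_last (x y : EuclideanSpace ℝ (Fin (d+1))) (hx : mink d x x < 0)
    (hy : mink d y y < 0) (hxy : mink d x y < 0) (hxl : 0 < x (Fin.last d)) :
    0 < y (Fin.last d) := by
  have hCS := Finset.sum_mul_sq_le_sq_mul_sq Finset.univ
    (fun i : Fin d => x i.castSucc) (fun i : Fin d => y i.castSucc)
  have hX : (0:ℝ) ≤ ∑ i : Fin d, x i.castSucc ^ 2 := by positivity
  have hY : (0:ℝ) ≤ ∑ i : Fin d, y i.castSucc ^ 2 := by positivity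
  simp only [mink] at hx hy hxy
  have hx2 : (∑ i : Fin d, x i.castSucc * x i.castSucc) = ∑ i : Fin d, x i.castSucc ^ 2 := by
    simp [sq]
  have hy2 : (∑ i : Fin d, y i.castSucc * y i.castSucc) = ∑ i : Fin d, y i.castSucc ^ 2 := by
    simp [sq]
  rw [hx2] at hx; rw [hy2] at hy
  set X := ∑ i : Fin d, x i.castSucc ^ 2
  set Y := ∑ i : Fin d, y i.castSucc ^ 2
  set S := ∑ i : Fin d, x i.castSucc * y i.castSucc
  set xl := x (Fin.last d); set yl := y (Fin.last d)
  by_contra hc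
  push_neg at hc
  have hYpos : 0 < yl * yl := lt_of_le_of_lt hY (by linarith)
  have hylne : yl ≠ 0 := by intro h; rw [h] at hYpos; simp at hYpos
  have hyl : yl < 0 := lt_of_le_of_ne hc hylne
  have hxyneg : S < xl * yl := by linarith
  have h1 : xl * yl < 0 := mul_neg_of_pos_of_neg hxl hyl
  have h2 : (xl*yl)^2 < S^2 := by nlinarith
  have h3 : X * Y < (xl*xl) * (yl*yl) :=
    calc X * Y ≤ X * (yl*yl) := mul_le_mul_of_nonneg_left (by linarith) hX
      _ < (xl*xl) * (yl*yl) := mul_lt_mul_of_pos_right (by nlinarith) hYpos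
  nlinarith [hCS]

lemma revCS (x y : EuclideanSpace ℝ (Fin (d+1))) (hx : mink d x x < 0)
    (hy : mink d y y < 0) (hxl : 0 < x (Fin.last d)) (hyl : 0 < y (Fin.last d)) :
    Real.sqrt (-mink d x x) * Real.sqrt (-mink d y y) ≤ -mink d x y := by
  have hCS := Finset.sum_mul_sq_le_sq_mul_sq Finset.univ
    (fun i : Fin d => x i.castSucc) (fun i : Fin d => y i.castSucc)
  have hX : (0:ℝ) ≤ ∑ i : Fin d, x i.castSucc ^ 2 := by positivity
  have hY : (0:ℝ) ≤ ∑ i : Fin d, y i.castSucc ^ 2 := by positivity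
  simp only [mink] at hx hy ⊢
  have hx2 : (∑ i : Fin d, x i.castSucc * x i.castSucc) = ∑ i : Fin d, x i.castSucc ^ 2 := by
    simp [sq]
  have hy2 : (∑ i : Fin d, y i.castSucc * y i.castSucc) = ∑ i : Fin d, y i.castSucc ^ 2 := by
    simp [sq]
  rw [hx2] at hx ⊢; rw [hy2] at hy ⊢
  set X := ∑ i : Fin d, x i.castSucc ^ 2
  set Y := ∑ i : Fin d, y i.castSucc ^ 2
  set S := ∑ i : Fin d, x i.castSucc * y i.castSucc
  set xl := x (Fin.last d); set yl := y (Fin.last d)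
  set X' := Real.sqrt X with hX'
  set Y' := Real.sqrt Y with hY'
  have hX'sq : X' ^ 2 = X := Real.sq_sqrt hX
  have hY'sq : Y' ^ 2 = Y := Real.sq_sqrt hY
  have hX'0 : 0 ≤ X' := Real.sqrt_nonneg _
  have hY'0 : 0 ≤ Y' := Real.sqrt_nonneg _
  have hX'lt : X' < xl := by nlinarith
  have hY'lt : Y' < yl := by nlinarith
  have hS : S ≤ X' * Y' := by nlinarith [mul_nonneg hX'0 hY'0]
  have hpos : 0 < xl * yl - S := by nlinarith [mul_pos hxl hyl]
  have h1 : Real.sqrt (-(X - xl*xl)) * Real.sqrt (-(Y - yl*yl)) =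
      Real.sqrt ((-(X - xl*xl)) * (-(Y - yl*yl))) := (Real.sqrt_mul (by nlinarith) _).symm
  rw [h1]
  have ha1 : 0 < xl * yl - X' * Y' := by nlinarith
  have ha3 : (xl*yl - X'*Y')^2 ≤ (xl*yl - S)^2 :=
    pow_le_pow_left₀ ha1.le (by linarith) 2
  have h2 : (-(X - xl*xl)) * (-(Y - yl*yl)) ≤ (-(S - xl*yl))^2 := by
    nlinarith [sq_nonneg (xl * Y' - X' * yl), ha3]
  calc Real.sqrt ((-(X - xl*xl)) * (-(Y - yl*yl))) ≤ Real.sqrt ((-(S - xl*yl))^2) :=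
        Real.sqrt_le_sqrt h2
    _ = -(S - xl*yl) := Real.sqrt_sq (by linarith)

lemma one_le_neg_mink (p q : Pt d) : 1 ≤ -(mink d p.1 q.1) := by
  have h := revCS p.1 q.1 (by rw [p.2.1]; norm_num) (by rw [q.2.1]; norm_num) p.2.2 q.2.2
  rw [p.2.1, q.2.1] at h
  simpa using h

lemma hdist_nonneg (p q : Pt d) : 0 ≤ hdist p q := by
  have h := one_le_neg_mink p q
  have : (1:ℝ) ≤ -(mink d p.1 q.1) + Real.sqrt ((-(mink d p.1 q.1))^2 - 1) := by
    have := Real.sqrt_nonneg ((-(mink d p.1 q.1))^2 - 1); linarith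
  exact Real.log_nonneg this

lemma hdist_comm (p q : Pt d) : hdist p q = hdist q p := by
  unfold hdist; rw [mink_comm]

lemma arcosh_le_arcosh {x y : ℝ} (h1 : 1 ≤ x) (h : x ≤ y) : arcosh x ≤ arcosh y := by
  unfold arcosh
  have hx : (0:ℝ) < x + Real.sqrt (x^2-1) := by
    have := Real.sqrt_nonneg (x^2-1); linarith
  apply Real.log_le_log hx
  have : Real.sqrt (x^2-1) ≤ Real.sqrt (y^2-1) := Real.sqrt_le_sqrt (by nlinarith)
  linarith

lemma one_le_sqrt_one_add (u : ℝ) : 1 ≤ Real.sqrt (1 + u^2) := by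
  have h : Real.sqrt (1+u^2) ^ 2 = 1 + u^2 := Real.sq_sqrt (by positivity)
  nlinarith [Real.sqrt_nonneg (1+u^2), sq_nonneg u]

lemma arcosh_add_arcosh (u w : ℝ) (hu : 0 ≤ u) (hw : 0 ≤ w) :
    arcosh (Real.sqrt (1+u^2)) + arcosh (Real.sqrt (1+w^2))
      = arcosh (Real.sqrt (1+u^2) * Real.sqrt (1+w^2) + u*w) := by
  set su := Real.sqrt (1+u^2) with hsu
  set sw := Real.sqrt (1+w^2) with hsw
  have hsu2 : su^2 = 1+u^2 := Real.sq_sqrt (by positivity)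
  have hsw2 : sw^2 = 1+w^2 := Real.sq_sqrt (by positivity)
  have hsu1 : 1 ≤ su := one_le_sqrt_one_add u
  have hsw1 : 1 ≤ sw := one_le_sqrt_one_add w
  have h1 : Real.sqrt (su^2 - 1) = u := by
    rw [show su^2 - 1 = u^2 by rw [hsu2]; ring]
    exact Real.sqrt_sq hu
  have h2 : Real.sqrt (sw^2 - 1) = w := by
    rw [show sw^2 - 1 = w^2 by rw [hsw2]; ring]
    exact Real.sqrt_sq hw
  have hc : (su*sw + u*w)^2 - 1 = (su*w + u*sw)^2 := by
    linear_combination (su^2 - u^2) * hsw2 + hsu2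
  have hR : Real.sqrt ((su*sw + u*w)^2 - 1) = su*w + u*sw := by
    rw [hc]; exact Real.sqrt_sq (by nlinarith)
  unfold arcosh
  rw [h1, h2, hR, ← Real.log_mul (by linarith) (by linarith)]
  congr 1; ring

/-- foot of perpendicular from `p` onto `plane v`. -/
lemma foot (v : EuclideanSpace ℝ (Fin (d+1))) (hv : mink d v v = 1) (p : Pt d) :
    ∃ h : Pt d, h ∈ plane v ∧
      hdist p h = arcosh (Real.sqrt (1 + (mink d v p.1)^2)) := by
  set a := mink d v p.1 with ha
  set s := Real.sqrt (1 + a^2) with hs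
  have hs2 : s^2 = 1 + a^2 := Real.sq_sqrt (by positivity)
  have hs1 : 1 ≤ s := one_le_sqrt_one_add a
  have hs0 : 0 < s := by linarith
  set w : EuclideanSpace ℝ (Fin (d+1)) := WithLp.toLp 2 (fun i => s⁻¹ * p.1 i + (-(s⁻¹*a)) * v i) with hw
  have hmvw : mink d v w = 0 := by
    rw [mink_comm, hw, mink_comb, mink_comm p.1 v, ← ha, hv]; ring
  have hmpw : mink d p.1 w = -s := by
    rw [mink_comm, hw, mink_comb, p.2.1, ← ha]
    have : s⁻¹ * -1 + -(s⁻¹ * a) * a = -(s⁻¹ * s^2) := by rw [hs2]; ring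
    rw [this]
    field_simp
  have hmww : mink d w w = -1 := by
    conv_lhs => rw [hw]
    rw [mink_comb, ← hw, hmpw, hmvw]
    field_simp
    ring
  have hwl : 0 < w (Fin.last d) := by
    apply pos_last p.1 w (by rw [p.2.1]; norm_num) (by rw [hmww]; norm_num)
      (by rw [hmpw]; linarith) p.2.2
  refine ⟨⟨w, hmww, hwl⟩, hmvw, ?_⟩
  show arcosh (-(mink d p.1 w)) = _
  rw [hmpw, neg_neg, hs]


set_option maxHeartbeats 1000000 in
/-- Lemma 2: a point on the far side of `H` from an ultraparallel
hyperplane `J` is strictly closer to `H` than to `J`. -/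
theorem dist_lt_of_far_side {d : ℕ} (v : EuclideanSpace ℝ (Fin (d + 1)))
    (hv : mink d v v = 1) (H J : Set (Pt d)) (hH : H = plane v)
    (hU : Ultraparallel H J)
    (hJside : ∀ q ∈ J, 0 < mink d v q.1)
    (p : Pt d) (hp : mink d v p.1 < 0) :
    distPS p H < distPS p J := by
  obtain ⟨hHyp, hJH, hdisj, hpos⟩ := hU
  have hJne : J.Nonempty := by
    rcases Set.eq_empty_or_nonempty J with hJe | h
    · exfalso
      have he : {r | ∃ a ∈ H, ∃ b ∈ J, hdist a b = r} = ∅ := by simp [hJe]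
      rw [distSS, he, Real.sInf_empty] at hpos
      exact lt_irrefl 0 hpos
    · exact h
  have hbdd : BddBelow {r | ∃ a ∈ H, ∃ b ∈ J, hdist a b = r} := by
    refine ⟨0, ?_⟩
    rintro r ⟨x, _, y, _, rfl⟩
    exact hdist_nonneg x y
  obtain ⟨hp0, hp0mem, hp0dist⟩ := foot v hv p
  have hAle : distPS p H ≤ arcosh (Real.sqrt (1 + (mink d v p.1)^2)) := by
    apply csInf_le
    · refine ⟨0, ?_⟩
      rintro r ⟨x, _, rfl⟩
      exact hdist_nonneg p x
    · exact ⟨hp0, by rw [hH]; exact hp0mem, hp0dist⟩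
  have key : ∀ q ∈ J, distPS p H + distSS H J ≤ hdist p q := by
    intro q hq
    have hb : 0 < mink d v q.1 := hJside q hq
    obtain ⟨hq0, hq0mem, hq0dist⟩ := foot v hv q
    have hεB : distSS H J ≤ arcosh (Real.sqrt (1 + (mink d v q.1)^2)) := by
      have hmem : hdist hq0 q ∈ {r | ∃ a ∈ H, ∃ b ∈ J, hdist a b = r} :=
        ⟨hq0, by rw [hH]; exact hq0mem, q, hq, rfl⟩
      have hle := csInf_le hbdd hmem
      rw [hdist_comm hq0 q, hq0dist] at hle
      exact hle
    set x : EuclideanSpace ℝ (Fin (d+1)) :=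
      WithLp.toLp 2 (fun i => (1:ℝ) * p.1 i + (-(mink d v p.1)) * v i) with hx
    set y : EuclideanSpace ℝ (Fin (d+1)) :=
      WithLp.toLp 2 (fun i => (1:ℝ) * q.1 i + (-(mink d v q.1)) * v i) with hy
    have hmxv : mink d x v = 0 := by
      rw [hx, mink_comb, hv, mink_comm p.1 v]; ring
    have hmyv : mink d y v = 0 := by
      rw [hy, mink_comb, hv, mink_comm q.1 v]; ring
    have hmxp : mink d x p.1 = -(1 + (mink d v p.1)^2) := by
      rw [hx, mink_comb, p.2.1]; ring
    have hmyq : mink d y q.1 = -(1 + (mink d v q.1)^2) := by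
      rw [hy, mink_comb, q.2.1]; ring
    have hmxx : mink d x x = -(1 + (mink d v p.1)^2) := by
      rw [hx, mink_comb, ← hx, mink_comm p.1 x, hmxp, mink_comm v x, hmxv]; ring
    have hmyy : mink d y y = -(1 + (mink d v q.1)^2) := by
      rw [hy, mink_comb, ← hy, mink_comm q.1 y, hmyq, mink_comm v y, hmyv]; ring
    have hmyp : mink d y p.1 = mink d p.1 q.1 - (mink d v q.1) * (mink d v p.1) := by
      rw [hy, mink_comb, mink_comm q.1 p.1]; ring
    have hmxy : mink d x y = mink d p.1 q.1 - (mink d v p.1) * (mink d v q.1) := by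
      rw [hx, mink_comb, mink_comm p.1 y, hmyp, mink_comm v y, hmyv]; ring
    have hxl : 0 < x (Fin.last d) := by
      apply pos_last p.1 x (by rw [p.2.1]; norm_num)
        (by rw [hmxx]; nlinarith [sq_nonneg (mink d v p.1)])
        (by rw [mink_comm, hmxp]; nlinarith [sq_nonneg (mink d v p.1)]) p.2.2
    have hyl : 0 < y (Fin.last d) := by
      apply pos_last q.1 y (by rw [q.2.1]; norm_num)
        (by rw [hmyy]; nlinarith [sq_nonneg (mink d v q.1)])
        (by rw [mink_comm, hmyq]; nlinarith [sq_nonneg (mink d v q.1)]) q.2.2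
    have hrev := revCS x y (by rw [hmxx]; nlinarith [sq_nonneg (mink d v p.1)])
      (by rw [hmyy]; nlinarith [sq_nonneg (mink d v q.1)]) hxl hyl
    rw [hmxx, hmyy, hmxy, neg_neg, neg_neg] at hrev
    have hfin : Real.sqrt (1 + (mink d v p.1)^2) * Real.sqrt (1 + (mink d v q.1)^2)
        + (-(mink d v p.1)) * (mink d v q.1) ≤ -(mink d p.1 q.1) := by linarith
    have hid := arcosh_add_arcosh (-(mink d v p.1)) (mink d v q.1) (by linarith) hb.le
    rw [neg_sq] at hid
    have hone : 1 ≤ Real.sqrt (1 + (mink d v p.1)^2) * Real.sqrt (1 + (mink d v q.1)^2)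
        + (-(mink d v p.1)) * (mink d v q.1) := by
      nlinarith [one_le_sqrt_one_add (mink d v p.1), one_le_sqrt_one_add (mink d v q.1),
        mul_nonneg (by linarith : (0:ℝ) ≤ -(mink d v p.1)) hb.le]
    have hmono := arcosh_le_arcosh hone hfin
    calc distPS p H + distSS H J
        ≤ arcosh (Real.sqrt (1 + (mink d v p.1)^2))
          + arcosh (Real.sqrt (1 + (mink d v q.1)^2)) := add_le_add hAle hεB
      _ = arcosh (Real.sqrt (1 + (mink d v p.1)^2) * Real.sqrt (1 + (mink d v q.1)^2)
          + (-(mink d v p.1)) * (mink d v q.1)) := hid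
      _ ≤ arcosh (-(mink d p.1 q.1)) := hmono
      _ = hdist p q := rfl
  have hJle : distPS p H + distSS H J ≤ distPS p J := by
    apply le_csInf (hJne.image _)
    rintro r ⟨q, hq, rfl⟩
    exact key q hq
  linarith


end HypSpace
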